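/- Let K be a field, t ≥ 1 an integer, and let a_1,…,a_t, a_1',…,a_t', b_1,…,b_t, b_1',…,b_t' ∈ K satisfy a_i ≠ 0 and a_i' ≠ 0 for all i, and a_i a_j' − a_i' a_j ≠ 0 for all i ≠ j. Then Π_{i=1}^t a_i b_i − Π_{i=1}^t a_i' b_i' = Σ_{i=1}^t ( Π_{j=1}^t (a_i b_j − a_i' b_j') ) · Π_{1 ≤ j ≤ t, j ≠ i} (a_i/a_j − a_i'/a_j')^{−1}. -/

import Mathlib

open scoped BigOperators

open Polynomial Finset in
lemma aux_lagrange_zero {K : Type*} [Field K] (t : ℕ) (c b b' : Fin t → K)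
    (hc : Function.Injective c) :
    ∏ j, b j - ∏ j, c j * b' j
      = ∑ i, (∏ j, (b j - c i * b' j))
          * ∏ j ∈ Finset.univ.erase i, ((c i - c j)⁻¹ * (0 - c j)) := by
  set P : K[X] := ∏ j, (C (b j) - C (b' j) * X) with hP
  set M : K[X] := ∏ j : Fin t, (X - C (c j)) with hM
  set Q : K[X] := P - C (∏ j, -b' j) * M with hQ
  have hfac : ∀ j : Fin t, (C (b j) - C (b' j) * X).natDegree ≤ 1 := by
    intro j; compute_degree
  have hPdeg : P.natDegree ≤ t := by
    refine le_trans (natDegree_prod_le _ _)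
      (le_trans (Finset.sum_le_card_nsmul _ _ 1 fun j _ => hfac j) ?_)
    simp
  have hMdeg : M.natDegree = t := by
    rw [hM, natDegree_prod_of_monic _ _ (fun j _ => monic_X_sub_C _)]
    simp [natDegree_X_sub_C]
  have hMmonic : M.Monic := monic_prod_of_monic _ _ fun j _ => monic_X_sub_C _
  have hPcoefft : P.coeff t = ∏ j, -b' j := by
    have h := coeff_prod_of_natDegree_le (s := (univ : Finset (Fin t)))
      (fun j => C (b j) - C (b' j) * X) 1 (fun p _ => hfac p)
    simp only [card_univ, Fintype.card_fin, mul_one] at h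
    rw [hP, h]
    refine Finset.prod_congr rfl fun j _ => ?_
    simp [coeff_sub, coeff_C]
  have hQdeg : Q.degree < (t : ℕ) := by
    rw [degree_lt_iff_coeff_zero]
    intro m hm
    rcases eq_or_lt_of_le hm with hm | hm
    · subst hm
      have hMc : M.coeff t = 1 := by rw [← hMdeg]; exact hMmonic.coeff_natDegree
      rw [hQ, coeff_sub, coeff_C_mul, hPcoefft, hMc, mul_one, sub_self]
    · rw [hQ, coeff_sub, coeff_C_mul,
        coeff_eq_zero_of_natDegree_lt (lt_of_le_of_lt hPdeg hm),
        coeff_eq_zero_of_natDegree_lt (by rw [hMdeg]; exact hm), mul_zero, sub_self]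
  have hinj : Set.InjOn c (univ : Finset (Fin t)) := hc.injOn
  have key := Lagrange.eq_interpolate (s := (univ : Finset (Fin t))) (v := c) hinj
    (by simpa using hQdeg)
  have h0 := congrArg (Polynomial.eval 0) key
  have hevalP : ∀ x : K, P.eval x = ∏ j, (b j - b' j * x) := by
    intro x; rw [hP, eval_prod]; exact Finset.prod_congr rfl fun j _ => by simp
  have hevalM : ∀ i : Fin t, M.eval (c i) = 0 := by
    intro i
    rw [hM, eval_prod]
    exact Finset.prod_eq_zero (mem_univ i) (by simp)
  have hQeval : ∀ i : Fin t, Q.eval (c i) = ∏ j, (b j - c i * b' j) := by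
    intro i
    rw [hQ, eval_sub, eval_mul, hevalM, mul_zero, sub_zero, hevalP]
    exact Finset.prod_congr rfl fun j _ => by ring
  have hQ0 : Q.eval 0 = ∏ j, b j - ∏ j, c j * b' j := by
    rw [hQ, eval_sub, eval_mul, eval_C, hevalP, hM, eval_prod]
    congr 1
    · exact Finset.prod_congr rfl fun j _ => by ring
    · rw [← Finset.prod_mul_distrib]
      exact Finset.prod_congr rfl fun j _ => by simp; ring
  rw [hQ0] at h0
  rw [h0, Lagrange.interpolate_apply, eval_finset_sum]
  refine Finset.sum_congr rfl fun i _ => ?_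
  rw [eval_mul, eval_C, hQeval, Lagrange.basis, eval_prod]
  congr 1
  refine Finset.prod_congr rfl fun j _ => ?_
  simp [Lagrange.basisDivisor]

theorem prod_sub_prod_eq_sum {K : Type*} [Field K] (t : ℕ) (ht : 1 ≤ t)
    (a a' b b' : Fin t → K)
    (ha : ∀ i, a i ≠ 0) (ha' : ∀ i, a' i ≠ 0)
    (hnd : ∀ i j : Fin t, i ≠ j → a i * a' j - a' i * a j ≠ 0) :
    ∏ i, a i * b i - ∏ i, a' i * b' i
      = ∑ i, (∏ j, (a i * b j - a' i * b' j))
          * ∏ j ∈ Finset.univ.erase i, (a i / a j - a' i / a' j)⁻¹ := by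
  set c : Fin t → K := fun i => a' i / a i with hcdef
  have ha'eq : ∀ i, a' i = a i * c i := by
    intro i; rw [hcdef, mul_comm]
    exact (div_mul_cancel₀ (a' i) (ha i)).symm
  have hcinj : Function.Injective c := by
    intro i j hij
    by_contra hne
    apply hnd i j hne
    simp only [hcdef] at hij
    rw [div_eq_div_iff (ha i) (ha j)] at hij
    linear_combination -hij
  have E := aux_lagrange_zero t c b b' hcinj
  have main : ∏ i, a i * b i - ∏ i, a' i * b' i
      = (∏ j, a j) * (∏ j, b j - ∏ j, c j * b' j) := by
    rw [mul_sub, ← Finset.prod_mul_distrib, ← Finset.prod_mul_distrib]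
    congr 1
    exact Finset.prod_congr rfl fun i _ => by rw [ha'eq i]; ring
  rw [main, E, Finset.mul_sum]
  refine Finset.sum_congr rfl fun i _ => ?_
  have hhead : a i * (b i - c i * b' i) = a i * b i - a' i * b' i := by
    rw [ha'eq i]; ring
  have key : ∀ j ∈ Finset.univ.erase i,
      a j * ((b j - c i * b' j) * ((c i - c j)⁻¹ * (0 - c j)))
        = (a i * b j - a' i * b' j) * (a i / a j - a' i / a' j)⁻¹ := by
    intro j hj
    have hij : i ≠ j := fun h => (Finset.mem_erase.mp hj).1 h.symm
    have hn1 : a' i * a j - a i * a' j ≠ 0 := by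
      intro h; apply hnd i j hij; linear_combination -h
    have hn2 : a i * a' j - a j * a' i ≠ 0 := by
      intro h; apply hnd i j hij; linear_combination h
    have hcij : c i - c j = (a' i * a j - a i * a' j) / (a i * a j) := by
      rw [hcdef]; exact div_sub_div _ _ (ha i) (ha j)
    have hastij : a i / a j - a' i / a' j = (a i * a' j - a j * a' i) / (a j * a' j) :=
      div_sub_div _ _ (ha j) (ha' j)
    have hai := ha i
    have haj := ha j
    have ha'i := ha' i
    have ha'j := ha' j
    have hn3 : -(a i * a' j) + a' i * a j ≠ 0 := by
      intro h; apply hn1; linear_combination h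
    rw [hcij, hastij, inv_div, inv_div, hcdef]
    field_simp
    linear_combination (b j * a i * a' j - a' i * b' j * a' j) * (mul_inv_cancel₀ hn3)
  have hprod := Finset.prod_congr rfl key
  have split1 : ∏ j ∈ Finset.univ.erase i,
        (a j * ((b j - c i * b' j) * ((c i - c j)⁻¹ * (0 - c j))))
      = (∏ j ∈ Finset.univ.erase i, a j) * ((∏ j ∈ Finset.univ.erase i, (b j - c i * b' j))
          * ∏ j ∈ Finset.univ.erase i, ((c i - c j)⁻¹ * (0 - c j))) := by
    rw [Finset.prod_mul_distrib, Finset.prod_mul_distrib]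
  have split2 : ∏ j ∈ Finset.univ.erase i,
        ((a i * b j - a' i * b' j) * (a i / a j - a' i / a' j)⁻¹)
      = (∏ j ∈ Finset.univ.erase i, (a i * b j - a' i * b' j))
          * ∏ j ∈ Finset.univ.erase i, (a i / a j - a' i / a' j)⁻¹ :=
    Finset.prod_mul_distrib
  have ea := Finset.mul_prod_erase Finset.univ a (Finset.mem_univ i)
  have eF := Finset.mul_prod_erase Finset.univ (fun j => b j - c i * b' j) (Finset.mem_univ i)
  have eF' := Finset.mul_prod_erase Finset.univ (fun j => a i * b j - a' i * b' j)
    (Finset.mem_univ i)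
  calc (∏ j, a j) * ((∏ j, (b j - c i * b' j))
        * ∏ j ∈ Finset.univ.erase i, ((c i - c j)⁻¹ * (0 - c j)))
      = (a i * (b i - c i * b' i)) * ((∏ j ∈ Finset.univ.erase i, a j)
          * ((∏ j ∈ Finset.univ.erase i, (b j - c i * b' j))
            * ∏ j ∈ Finset.univ.erase i, ((c i - c j)⁻¹ * (0 - c j)))) := by
        rw [← ea, ← eF]; ring
    _ = (a i * (b i - c i * b' i)) * ∏ j ∈ Finset.univ.erase i,
          (a j * ((b j - c i * b' j) * ((c i - c j)⁻¹ * (0 - c j)))) := by rw [split1]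
    _ = (a i * b i - a' i * b' i) * ∏ j ∈ Finset.univ.erase i,
          ((a i * b j - a' i * b' j) * (a i / a j - a' i / a' j)⁻¹) := by rw [hhead, hprod]
    _ = (∏ j, (a i * b j - a' i * b' j))
          * ∏ j ∈ Finset.univ.erase i, (a i / a j - a' i / a' j)⁻¹ := by
        rw [split2, ← eF']; ring
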